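/- Let G be a triangle-free graph on n vertices with maximum degree at most d and independence number at most α, and let G' be its r-blowup with N = rn vertices. If d ≤ (1+o(1))√((1/2)n ln n), α ≤ (1+o(1))√(2n ln n), and r = (1/2)ln n, then i(G') ≤ e^{(1+o(1))(1+ln 2)√N·ln N}. -/

import Mathlib

open Classical Finset Real

/-- The number of independent sets of a graph (including the empty set). -/
noncomputable def numIndep {V : Type*} [Fintype V] (G : SimpleGraph V) : ℕ :=
  Nat.card {s : Finset V // ∀ u ∈ s, ∀ w ∈ s, ¬ G.Adj u w}

/-- The independence number of a graph. -/
noncomputable def indepNum {V : Type*} [Fintype V] (G : SimpleGraph V) : ℕ :=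
  sSup {m | ∃ s : Finset V, (∀ u ∈ s, ∀ w ∈ s, ¬ G.Adj u w) ∧ s.card = m}

/-- The `r`-blowup of `G`. -/
def blowup {V : Type*} (G : SimpleGraph V) (r : ℕ) : SimpleGraph (V × Fin r) where
  Adj x y := G.Adj x.1 y.1
  symm := ⟨fun _ _ h => G.symm.symm _ _ h⟩
  loopless := ⟨fun x h => G.loopless.irrefl x.1 h⟩

private lemma indep_bddAbove {n : ℕ} (G : SimpleGraph (Fin n)) :
    BddAbove {m | ∃ s : Finset (Fin n), (∀ u ∈ s, ∀ w ∈ s, ¬ G.Adj u w) ∧ s.card = m} := by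
  refine ⟨n, ?_⟩
  rintro m ⟨t, -, rfl⟩
  exact (Finset.card_le_univ t).trans_eq (by simp)

private lemma indep_card_le {n : ℕ} (G : SimpleGraph (Fin n)) {s : Finset (Fin n)}
    (hs : ∀ u ∈ s, ∀ w ∈ s, ¬ G.Adj u w) : s.card ≤ indepNum G :=
  le_csSup (indep_bddAbove G) ⟨s, hs, rfl⟩

private lemma pow_self_le (a : ℕ) : (a : ℝ) ^ a ≤ Real.exp a * a.factorial := by
  induction a with
  | zero => simp
  | succ a ih =>
    rcases Nat.eq_zero_or_pos a with rfl | ha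
    · simpa using Real.one_le_exp (by norm_num : (0:ℝ) ≤ 1)
    · have ha' : (0:ℝ) < a := by exact_mod_cast ha
      have h2 : (1 + 1/(a:ℝ)) ^ a ≤ Real.exp 1 := by
        calc (1 + 1/(a:ℝ)) ^ a ≤ (Real.exp (1/(a:ℝ))) ^ a := by
              apply pow_le_pow_left₀ (by positivity)
              linarith [Real.add_one_le_exp (1/(a:ℝ))]
          _ = Real.exp 1 := by
              rw [← Real.exp_nat_mul]; congr 1; field_simp
      have h1 : ((a:ℝ)+1) ^ a ≤ Real.exp 1 * (a:ℝ)^a := by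
        have heq : ((a:ℝ)+1) = (a:ℝ) * (1 + 1/(a:ℝ)) := by field_simp
        rw [heq, mul_pow]
        calc (a:ℝ)^a * (1+1/(a:ℝ))^a ≤ (a:ℝ)^a * Real.exp 1 :=
              mul_le_mul_of_nonneg_left h2 (by positivity)
          _ = Real.exp 1 * (a:ℝ)^a := mul_comm _ _
      calc ((a+1:ℕ):ℝ) ^ (a+1) = ((a:ℝ)+1)^a * ((a:ℝ)+1) := by push_cast; ring
        _ ≤ (Real.exp 1 * (a:ℝ)^a) * ((a:ℝ)+1) :=
            mul_le_mul_of_nonneg_right h1 (by positivity)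
        _ ≤ (Real.exp 1 * (Real.exp a * a.factorial)) * ((a:ℝ)+1) := by
            have := mul_le_mul_of_nonneg_left ih (Real.exp_nonneg 1)
            exact mul_le_mul_of_nonneg_right this (by positivity)
        _ = Real.exp ((a:ℝ)+1) * ((a+1:ℕ).factorial : ℝ) := by
            rw [Nat.factorial_succ, Real.exp_add]; push_cast; ring
        _ = Real.exp ((a+1:ℕ):ℝ) * ((a+1:ℕ).factorial : ℝ) := by push_cast; ring_nf

private lemma fact_pow_le {n : ℕ} : ∀ b a : ℕ, a ≤ b → b ≤ n →
    b.factorial * n ^ a ≤ a.factorial * n ^ b := by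
  intro b
  induction b with
  | zero => intro a ha _; interval_cases a; simp
  | succ b ih =>
    intro a ha hbn
    rcases Nat.lt_or_ge a (b+1) with h | h
    · have ha' : a ≤ b := Nat.lt_succ_iff.mp h
      calc (b+1).factorial * n^a = (b+1) * (b.factorial * n^a) := by
            rw [Nat.factorial_succ]; ring
        _ ≤ (b+1) * (a.factorial * n^b) :=
            Nat.mul_le_mul_left _ (ih a ha' (le_trans (Nat.le_succ b) hbn))
        _ ≤ n * (a.factorial * n^b) := Nat.mul_le_mul_right _ hbn
        _ = a.factorial * n^(b+1) := by ring
    · have : a = b+1 := le_antisymm ha h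
      subst this; exact le_refl _

private lemma count_bound {n r : ℕ} (G : SimpleGraph (Fin n)) :
    numIndep (blowup G r) ≤
      (∑ k ∈ Finset.range (indepNum G + 1), n.choose k) * 2 ^ (indepNum G * r) := by
  classical
  set α := indepNum G with hα
  have hcard : numIndep (blowup G r) =
      (Finset.univ.filter (fun t : Finset (Fin n × Fin r) =>
        ∀ u ∈ t, ∀ w ∈ t, ¬ (blowup G r).Adj u w)).card := by
    rw [numIndep, Nat.card_eq_fintype_card, Fintype.card_subtype]
  set B : Finset (Finset (Fin n)) :=
    Finset.univ.filter (fun s : Finset (Fin n) => ∀ u ∈ s, ∀ w ∈ s, ¬ G.Adj u w) with hB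
  have hsub : (Finset.univ.filter (fun t : Finset (Fin n × Fin r) =>
      ∀ u ∈ t, ∀ w ∈ t, ¬ (blowup G r).Adj u w)) ⊆
      B.biUnion (fun S => (S ×ˢ (Finset.univ : Finset (Fin r))).powerset) := by
    intro t ht
    rw [Finset.mem_filter] at ht
    have hind : ∀ u ∈ t.image Prod.fst, ∀ w ∈ t.image Prod.fst, ¬ G.Adj u w := by
      intro u hu w hw
      rcases Finset.mem_image.mp hu with ⟨a, ha, rfl⟩
      rcases Finset.mem_image.mp hw with ⟨b, hb, rfl⟩
      exact ht.2 a ha b hb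
    refine Finset.mem_biUnion.mpr ⟨t.image Prod.fst, ?_, ?_⟩
    · exact Finset.mem_filter.mpr ⟨Finset.mem_univ _, hind⟩
    · exact Finset.mem_powerset.mpr (fun a ha =>
        Finset.mem_product.mpr ⟨Finset.mem_image_of_mem _ ha, Finset.mem_univ _⟩)
  have h1 : numIndep (blowup G r) ≤ ∑ S ∈ B, 2 ^ (S.card * r) := by
    rw [hcard]
    refine (Finset.card_le_card hsub).trans (Finset.card_biUnion_le.trans ?_)
    refine Finset.sum_le_sum fun S _ => ?_
    rw [Finset.card_powerset, Finset.card_product, Finset.card_univ, Fintype.card_fin]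
  have h3 : numIndep (blowup G r) ≤ B.card * 2 ^ (α * r) := by
    refine h1.trans ?_
    calc ∑ S ∈ B, 2 ^ (S.card * r) ≤ ∑ _S ∈ B, 2 ^ (α * r) := by
          refine Finset.sum_le_sum fun S hS => ?_
          exact Nat.pow_le_pow_right (by norm_num)
            (Nat.mul_le_mul_right r (indep_card_le G (Finset.mem_filter.mp hS).2))
      _ = B.card * 2 ^ (α * r) := by rw [Finset.sum_const, smul_eq_mul]
  have h4 : B.card ≤ ∑ k ∈ Finset.range (α + 1), n.choose k := by
    have hsub2 : B ⊆ (Finset.range (α+1)).biUnion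
        (fun k => Finset.powersetCard k Finset.univ) := by
      intro S hS
      refine Finset.mem_biUnion.mpr ⟨S.card, ?_, Finset.mem_powersetCard_univ.mpr rfl⟩
      exact Finset.mem_range.mpr (Nat.lt_succ_of_le (indep_card_le G (Finset.mem_filter.mp hS).2))
    refine (Finset.card_le_card hsub2).trans (Finset.card_biUnion_le.trans (le_of_eq ?_))
    refine Finset.sum_congr rfl fun k _ => ?_
    rw [Finset.card_powersetCard, Finset.card_univ, Fintype.card_fin]
  exact h3.trans (Nat.mul_le_mul_right _ h4)

private lemma mono_f {n : ℝ} (hn : 1 ≤ n) :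
    MonotoneOn (fun x : ℝ => x * (1 + Real.log n - Real.log x)) (Set.Icc 1 n) := by
  apply monotoneOn_of_deriv_nonneg (convex_Icc 1 n)
  · apply ContinuousOn.mul continuousOn_id
    apply ContinuousOn.sub continuousOn_const
    exact ContinuousOn.log continuousOn_id (fun x hx => by
      have : (1:ℝ) ≤ x := hx.1
      positivity)
  · rw [interior_Icc]
    intro x hx
    have hx0 : x ≠ 0 := by have := hx.1; positivity
    exact (((hasDerivAt_id x).mul ((hasDerivAt_const x (1 + Real.log n)).sub
      (Real.hasDerivAt_log hx0))).differentiableAt).differentiableWithinAt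
  · rw [interior_Icc]
    intro x hx
    have hx1 : (1:ℝ) < x := hx.1
    have hx0 : x ≠ 0 := by positivity
    have hd : HasDerivAt (fun x : ℝ => x * (1 + Real.log n - Real.log x))
        (1 * (1 + Real.log n - Real.log x) + x * (0 - x⁻¹)) x :=
      (hasDerivAt_id x).mul ((hasDerivAt_const x (1 + Real.log n)).sub
        (Real.hasDerivAt_log hx0))
    rw [hd.deriv]
    have hxinv : x * x⁻¹ = 1 := mul_inv_cancel₀ hx0
    have hlog : Real.log x ≤ Real.log n := Real.log_le_log (by linarith) hx.2.le
    nlinarith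

open Filter in
private lemma ev_key (ε : ℝ) (hε : 0 < ε) :
    ∀ᶠ L : ℝ in Filter.atTop,
      (1+ε/2)*(4 + 2*Real.log 2 + L*(1+Real.log 2)) ≤
        (1+ε)*(1+Real.log 2)*L*Real.sqrt (1-2/L) := by
  have hlog2 : (0:ℝ) < Real.log 2 := Real.log_pos (by norm_num)
  have t1 : Filter.Tendsto (fun L : ℝ => (1+ε/2)*((4+2*Real.log 2)/L + (1+Real.log 2)))
      Filter.atTop (nhds ((1+ε/2)*(0+(1+Real.log 2)))) :=
    Filter.Tendsto.const_mul _ ((tendsto_const_nhds.div_atTop tendsto_id).add tendsto_const_nhds)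
  have t2 : Filter.Tendsto (fun L : ℝ => (1+ε)*(1+Real.log 2)*Real.sqrt (1-2/L))
      Filter.atTop (nhds ((1+ε)*(1+Real.log 2)*Real.sqrt 1)) := by
    apply Filter.Tendsto.const_mul
    apply Filter.Tendsto.sqrt
    have : Filter.Tendsto (fun L : ℝ => 1 - 2/L) Filter.atTop (nhds (1 - 0)) :=
      tendsto_const_nhds.sub (tendsto_const_nhds.div_atTop tendsto_id)
    simpa using this
  have hlt : (1+ε/2)*(0+(1+Real.log 2)) < (1+ε)*(1+Real.log 2)*Real.sqrt 1 := by
    rw [Real.sqrt_one]; nlinarith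
  filter_upwards [t1.eventually_lt t2 hlt, Filter.eventually_ge_atTop (1:ℝ)] with L h1 hL1
  have hL0 : (0:ℝ) < L := by linarith
  calc (1+ε/2)*(4 + 2*Real.log 2 + L*(1+Real.log 2))
      = ((1+ε/2)*((4+2*Real.log 2)/L + (1+Real.log 2))) * L := by field_simp
    _ ≤ ((1+ε)*(1+Real.log 2)*Real.sqrt (1-2/L)) * L :=
        mul_le_mul_of_nonneg_right h1.le hL0.le
    _ = (1+ε)*(1+Real.log 2)*L*Real.sqrt (1-2/L) := by ring

open Filter in
private lemma ev_log_small (ε : ℝ) (hε : 0 < ε) :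
    ∀ᶠ n : ℕ in Filter.atTop, 2*(1+ε/2)^2 * Real.log n ≤ n := by
  have hc : (0:ℝ) < (2*(1+ε/2)^2)⁻¹ := by positivity
  have hlo := Real.isLittleO_log_id_atTop.def hc
  filter_upwards [tendsto_natCast_atTop_atTop.eventually hlo,
    Filter.eventually_ge_atTop 1] with n h1 hn1
  have hn1' : (1:ℝ) ≤ n := by exact_mod_cast hn1
  simp only [Real.norm_eq_abs, id] at h1
  have habs : |(n:ℝ)| = n := abs_of_nonneg (by linarith)
  have hle : Real.log n ≤ (2*(1+ε/2)^2)⁻¹ * n := by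
    calc Real.log n ≤ |Real.log n| := le_abs_self _
      _ ≤ (2*(1+ε/2)^2)⁻¹ * |(n:ℝ)| := h1
      _ = (2*(1+ε/2)^2)⁻¹ * n := by rw [habs]
  have h2 : (0:ℝ) < 2*(1+ε/2)^2 := by positivity
  calc 2*(1+ε/2)^2 * Real.log n ≤ 2*(1+ε/2)^2 * ((2*(1+ε/2)^2)⁻¹ * n) :=
        mul_le_mul_of_nonneg_left hle h2.le
    _ = n := by rw [← mul_assoc, mul_inv_cancel₀ h2.ne', one_mul]

set_option maxHeartbeats 2000000 in
/-- Let `G` be a triangle-free graph on `n` vertices with maximum degree at most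
`(1+o(1))√((1/2)n ln n)` and independence number at most `(1+o(1))√(2n ln n)`, and let
`G'` be its `r`-blowup with `r = (1/2)ln n` and `N = rn` vertices. Then
`i(G') ≤ e^{(1+o(1))(1+ln 2)√N·ln N}`. -/
theorem stmt18 :
    ∀ ε > (0 : ℝ), ∃ δ > (0 : ℝ), ∃ n₀ : ℕ, ∀ n : ℕ, n₀ ≤ n →
    ∀ G : SimpleGraph (Fin n), G.CliqueFree 3 →
    (∀ v, (Nat.card {w // G.Adj v w} : ℝ) ≤
      (1 + δ) * Real.sqrt ((1 / 2) * n * Real.log n)) →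
    ((indepNum G : ℝ) ≤ (1 + δ) * Real.sqrt (2 * n * Real.log n)) →
    ∀ r : ℕ, |(r : ℝ) - (1 / 2) * Real.log n| ≤ 1 →
    (numIndep (blowup G r) : ℝ) ≤
      Real.exp ((1 + ε) * (1 + Real.log 2) *
        Real.sqrt ((r : ℝ) * n) * Real.log ((r : ℝ) * n)) := by
  intro ε hε
  refine ⟨ε/2, by linarith, ?_⟩
  have hev : ∀ᶠ n : ℕ in Filter.atTop,
      (3 ≤ n ∧ 4 ≤ Real.log n ∧ 2*(1+ε/2)^2 * Real.log n ≤ n) ∧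
      ((1+ε/2)*(4 + 2*Real.log 2 + Real.log n*(1+Real.log 2)) ≤
        (1+ε)*(1+Real.log 2)*Real.log n*Real.sqrt (1-2/Real.log n)) := by
    have hlogTop : Filter.Tendsto (fun n : ℕ => Real.log n) Filter.atTop Filter.atTop :=
      Real.tendsto_log_atTop.comp tendsto_natCast_atTop_atTop
    refine Filter.Eventually.and (Filter.Eventually.and ?_ (Filter.Eventually.and ?_ ?_)) ?_
    · exact Filter.eventually_ge_atTop 3
    · exact hlogTop.eventually_ge_atTop 4
    · exact ev_log_small ε hε
    · exact hlogTop.eventually (ev_key ε hε)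
  rcases Filter.eventually_atTop.mp hev with ⟨n₀, hn₀⟩
  refine ⟨n₀, ?_⟩
  intro n hn G _hG3 _hdeg hαbd r hr
  obtain ⟨⟨hn3, hL4, hAn⟩, hP⟩ := hn₀ n hn
  set L := Real.log n with hLdef
  set α := indepNum G with hαdef
  set A := (1+ε/2) * Real.sqrt (2*(n:ℝ)*L) with hAdef
  set s := Real.sqrt ((n:ℝ)*L/2) with hsdef
  clear_value α A s
  have hn3' : (3:ℝ) ≤ n := by exact_mod_cast hn3
  have hn0 : (0:ℝ) < n := by linarith
  have hL0 : (0:ℝ) < L := by linarith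
  have hlog2 : (0:ℝ) < Real.log 2 := Real.log_pos (by norm_num)
  have hs0 : (0:ℝ) < s := by
    rw [hsdef]; exact Real.sqrt_pos.mpr (by nlinarith)
  have h2s : Real.sqrt (2*(n:ℝ)*L) = 2*s := by
    rw [hsdef, show (2:ℝ)*(n:ℝ)*L = 2^2 * ((n:ℝ)*L/2) by ring,
      Real.sqrt_mul (by norm_num), Real.sqrt_sq (by norm_num : (0:ℝ) ≤ 2)]
  have hs1 : (1:ℝ) ≤ s := by
    rw [hsdef, show (1:ℝ) = Real.sqrt 1 from Real.sqrt_one.symm]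
    apply Real.sqrt_le_sqrt; nlinarith
  -- α bounds
  have hα1 : 1 ≤ α := by
    rw [hαdef]
    have hmem : (1:ℕ) ∈ {m | ∃ s : Finset (Fin n), (∀ u ∈ s, ∀ w ∈ s, ¬ G.Adj u w) ∧ s.card = m} := by
      refine ⟨{(⟨0, by omega⟩ : Fin n)}, ?_, by simp⟩
      intro u hu w hw
      simp only [Finset.mem_singleton] at hu hw
      subst hu; subst hw; exact G.loopless.irrefl _
    exact le_csSup (indep_bddAbove G) hmem
  have hα0R : (0:ℝ) < (α:ℝ) := by exact_mod_cast hα1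
  have hαA : (α:ℝ) ≤ A := hαbd
  have hAn' : A ≤ (n:ℝ) := by
    have h1 : Real.sqrt ((1+ε/2)^2 * (2*(n:ℝ)*L)) = A := by
      rw [Real.sqrt_mul (by positivity : (0:ℝ) ≤ (1+ε/2)^2),
        Real.sqrt_sq (by linarith : (0:ℝ) ≤ 1+ε/2), hAdef]
    rw [← h1]
    have h2 : (1+ε/2)^2 * (2*(n:ℝ)*L) ≤ (n:ℝ)^2 := by nlinarith
    calc Real.sqrt ((1+ε/2)^2*(2*(n:ℝ)*L)) ≤ Real.sqrt ((n:ℝ)^2) := Real.sqrt_le_sqrt h2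
      _ = n := Real.sqrt_sq hn0.le
  have hA2s : A = 2*(1+ε/2)*s := by rw [hAdef, h2s]; ring
  have h1A : (1:ℝ) ≤ A := by rw [hA2s]; nlinarith
  have hαn : (α:ℝ) ≤ (n:ℝ) := hαA.trans hAn'
  have hαn_nat : α ≤ n := by exact_mod_cast hαn
  -- r bounds
  have hrabs := abs_le.mp hr
  have hr_lo : L/2 - 1 ≤ (r:ℝ) := by have := hrabs.1; linarith
  have hr_hi : (r:ℝ) ≤ L/2 + 1 := by have := hrabs.2; linarith
  have hr1 : (1:ℝ) ≤ (r:ℝ) := by linarith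
  -- log A lower bound
  have hsqn : Real.sqrt n ≤ A := by
    have h1 : (n:ℝ) ≤ 2*(n:ℝ)*L := by nlinarith
    calc Real.sqrt n ≤ Real.sqrt (2*(n:ℝ)*L) := Real.sqrt_le_sqrt h1
      _ ≤ A := by
          rw [hAdef]
          nth_rewrite 1 [← one_mul (Real.sqrt (2*(n:ℝ)*L))]
          exact mul_le_mul_of_nonneg_right (by linarith) (Real.sqrt_nonneg _)
  have hlogA : L/2 ≤ Real.log A := by
    calc L/2 = Real.log (Real.sqrt n) := by rw [Real.log_sqrt hn0.le]
      _ ≤ Real.log A := Real.log_le_log (Real.sqrt_pos.mpr hn0) hsqn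
  -- the function f
  set f : ℝ → ℝ := fun x => x * (1 + L - Real.log x) with hfdef
  -- cast combinatorial bound
  have hcb : (numIndep (blowup G r) : ℝ) ≤
      (∑ k ∈ Finset.range (α+1), (n.choose k : ℝ)) * 2 ^ (α*r) := by
    have h := count_bound (r := r) G
    rw [← hαdef] at h
    calc (numIndep (blowup G r) : ℝ)
        ≤ (((∑ k ∈ Finset.range (α + 1), n.choose k) * 2 ^ (α * r) : ℕ) : ℝ) := by
          exact_mod_cast h
      _ = (∑ k ∈ Finset.range (α+1), (n.choose k : ℝ)) * 2 ^ (α*r) := by push_cast; ring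
  -- term bound
  have hterm : ∀ k ∈ Finset.range (α+1), (n.choose k : ℝ) ≤ Real.exp (f α) := by
    intro k hk
    have hkα : k ≤ α := Nat.lt_succ_iff.mp (Finset.mem_range.mp hk)
    have h1 : (n.choose k : ℝ) ≤ (n:ℝ)^k / k.factorial := Nat.choose_le_pow_div k n
    have hkfac : (0:ℝ) < (k.factorial : ℝ) := by exact_mod_cast k.factorial_pos
    have hαfac : (0:ℝ) < (α.factorial : ℝ) := by exact_mod_cast α.factorial_pos
    have h2 : (n:ℝ)^k / k.factorial ≤ (n:ℝ)^α / α.factorial := by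
      rw [div_le_div_iff₀ hkfac hαfac]
      have h := fact_pow_le (n := n) α k hkα hαn_nat
      have h' : ((α.factorial * n^k : ℕ) : ℝ) ≤ ((k.factorial * n^α : ℕ) : ℝ) := by
        exact_mod_cast h
      push_cast at h'
      linarith
    have h3 : (n:ℝ)^α / α.factorial ≤ (Real.exp 1 * n / (α:ℝ))^α := by
      rw [div_pow, mul_pow, div_le_div_iff₀ hαfac (pow_pos hα0R α)]
      calc (n:ℝ)^α * (α:ℝ)^α ≤ (n:ℝ)^α * (Real.exp α * α.factorial) :=
            mul_le_mul_of_nonneg_left (pow_self_le α) (by positivity)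
        _ = Real.exp 1 ^ α * (n:ℝ)^α * α.factorial := by
            rw [show Real.exp (α:ℝ) = Real.exp 1 ^ α by
              rw [← Real.exp_nat_mul]; norm_num]
            ring
    have hconv : (Real.exp 1 * n / (α:ℝ))^α = Real.exp (f α) := by
      rw [hfdef]
      show _ = Real.exp ((α:ℝ) * (1 + L - Real.log (α:ℝ)))
      rw [Real.exp_nat_mul, Real.exp_sub, Real.exp_add, Real.exp_log hn0,
        Real.exp_log hα0R]
    calc (n.choose k : ℝ) ≤ (n:ℝ)^k / k.factorial := h1
      _ ≤ (n:ℝ)^α / α.factorial := h2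
      _ ≤ (Real.exp 1 * n / (α:ℝ))^α := h3
      _ = Real.exp (f α) := hconv
  have hsum : (∑ k ∈ Finset.range (α+1), (n.choose k : ℝ)) ≤ ((α:ℝ)+1) * Real.exp (f α) := by
    calc (∑ k ∈ Finset.range (α+1), (n.choose k : ℝ))
        ≤ ∑ _k ∈ Finset.range (α+1), Real.exp (f α) := Finset.sum_le_sum hterm
      _ = ((α:ℝ)+1) * Real.exp (f α) := by
          rw [Finset.sum_const, Finset.card_range, nsmul_eq_mul]; push_cast; ring
  -- monotonicity
  have hfmono : f (α:ℝ) ≤ f A := by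
    have hmem1 : (α:ℝ) ∈ Set.Icc (1:ℝ) (n:ℝ) := ⟨by exact_mod_cast hα1, hαn⟩
    have hmem2 : A ∈ Set.Icc (1:ℝ) (n:ℝ) := ⟨h1A, hAn'⟩
    exact mono_f (by linarith) hmem1 hmem2 hαA
  -- 2 powers
  have h2pow : ((2:ℝ))^(α*r) = Real.exp ((α*r : ℕ) * Real.log 2) := by
    rw [Real.exp_nat_mul, Real.exp_log (by norm_num : (0:ℝ) < 2)]
  have hmain : (numIndep (blowup G r):ℝ) ≤ Real.exp (A + f A + A * r * Real.log 2) := by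
    calc (numIndep (blowup G r):ℝ)
        ≤ (∑ k ∈ Finset.range (α+1), (n.choose k : ℝ)) * 2 ^ (α*r) := hcb
      _ ≤ (((α:ℝ)+1) * Real.exp (f α)) * 2 ^ (α*r) :=
          mul_le_mul_of_nonneg_right hsum (by positivity)
      _ ≤ (Real.exp A * Real.exp (f A)) * Real.exp ((α*r : ℕ) * Real.log 2) := by
          rw [← h2pow]
          apply mul_le_mul_of_nonneg_right _ (by positivity)
          apply mul_le_mul _ (Real.exp_le_exp.mpr hfmono) (Real.exp_nonneg _) (Real.exp_nonneg _)
          calc (α:ℝ)+1 ≤ A+1 := by linarith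
            _ ≤ Real.exp A := Real.add_one_le_exp A
      _ ≤ (Real.exp A * Real.exp (f A)) * Real.exp (A * r * Real.log 2) := by
          apply mul_le_mul_of_nonneg_left _ (by positivity)
          apply Real.exp_le_exp.mpr
          push_cast
          exact mul_le_mul_of_nonneg_right
            (mul_le_mul_of_nonneg_right hαA (Nat.cast_nonneg r)) hlog2.le
      _ = Real.exp (A + f A + A * r * Real.log 2) := by
          rw [← Real.exp_add, ← Real.exp_add]
  -- exponent comparison
  have hfA : f A ≤ A + A*(L/2) := by
    have h : f A = A*(1 + L - Real.log A) := rfl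
    rw [h]
    calc A*(1 + L - Real.log A) ≤ A*(1+L/2) :=
          mul_le_mul_of_nonneg_left (by linarith) (by linarith)
      _ = A + A*(L/2) := by ring
  have hrA : A*r*Real.log 2 ≤ A*(L/2+1)*Real.log 2 := by
    apply mul_le_mul_of_nonneg_right _ hlog2.le
    apply mul_le_mul_of_nonneg_left hr_hi (by linarith)
  have hsq : Real.sqrt (1-2/L) * s ≤ Real.sqrt ((r:ℝ)*n) := by
    have h01 : (0:ℝ) ≤ 1 - 2/L := by
      have : 2/L ≤ 1 := by rw [div_le_one hL0]; linarith
      linarith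
    rw [hsdef, ← Real.sqrt_mul h01]
    apply Real.sqrt_le_sqrt
    have heq : (1-2/L) * ((n:ℝ)*L/2) = (n:ℝ)*(L/2-1) := by
      field_simp
    rw [heq]
    nlinarith
  have hlogrn : L ≤ Real.log ((r:ℝ)*n) := by
    apply Real.log_le_log hn0
    nlinarith
  have hexp : A + f A + A*r*Real.log 2 ≤
      (1+ε)*(1+Real.log 2)*Real.sqrt ((r:ℝ)*n) * Real.log ((r:ℝ)*n) := by
    have hstep1 : A + f A + A*r*Real.log 2 ≤
        ((1+ε/2)*(4 + 2*Real.log 2 + L*(1+Real.log 2))) * s := by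
      have hsum2 : A + (A + A*(L/2)) + A*(L/2+1)*Real.log 2
          = ((1+ε/2)*(4 + 2*Real.log 2 + L*(1+Real.log 2))) * s := by
        rw [hA2s]; ring
      linarith
    have hstep2 : ((1+ε/2)*(4 + 2*Real.log 2 + L*(1+Real.log 2))) * s ≤
        ((1+ε)*(1+Real.log 2)*L*Real.sqrt (1-2/L)) * s :=
      mul_le_mul_of_nonneg_right hP hs0.le
    have hstep3 : ((1+ε)*(1+Real.log 2)*L*Real.sqrt (1-2/L)) * s ≤
        (1+ε)*(1+Real.log 2)*Real.sqrt ((r:ℝ)*n) * Real.log ((r:ℝ)*n) := by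
      have hc0 : (0:ℝ) ≤ (1+ε)*(1+Real.log 2) := by nlinarith
      have hX0 : (0:ℝ) ≤ Real.sqrt (1-2/L) * s := mul_nonneg (Real.sqrt_nonneg _) hs0.le
      have hprod : L * (Real.sqrt (1-2/L) * s) ≤
          Real.log ((r:ℝ)*n) * Real.sqrt ((r:ℝ)*n) :=
        mul_le_mul hlogrn hsq hX0 (by linarith)
      calc ((1+ε)*(1+Real.log 2)*L*Real.sqrt (1-2/L)) * s
          = (1+ε)*(1+Real.log 2) * (L * (Real.sqrt (1-2/L) * s)) := by ring
        _ ≤ (1+ε)*(1+Real.log 2) * (Real.log ((r:ℝ)*n) * Real.sqrt ((r:ℝ)*n)) :=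
            mul_le_mul_of_nonneg_left hprod hc0
        _ = (1+ε)*(1+Real.log 2)*Real.sqrt ((r:ℝ)*n) * Real.log ((r:ℝ)*n) := by ring
    exact le_trans hstep1 (le_trans hstep2 hstep3)
  exact hmain.trans (Real.exp_le_exp.mpr hexp)
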